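/- Let m ≥ 0 be an integer and r0 > 0 a real number. Then |I_2(m, r0)| ≤ exp(r0²/(2m+3)) − 1. -/

import Mathlib

open Real

/-- `I₂(m, r₀)` from the paper. -/
noncomputable def I2 (m : ℕ) (r0 : ℝ) : ℝ :=
  ∑' k : ℕ,
    (-1 : ℝ) ^ (k + 1) * (r0 / 2) ^ (2 * (k + 1)) *
      ((2 * (m : ℝ) + 3) / (2 * (m : ℝ) + 2 * ((k : ℝ) + 1) + 3)) *
      ∑ p ∈ Finset.HasAntidiagonal.antidiagonal (k + 1),
        Real.Gamma ((m : ℝ) + 3 / 2) ^ 2 /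
          ((Nat.factorial p.1 : ℝ) * (Nat.factorial p.2 : ℝ) *
            Real.Gamma ((m : ℝ) + (p.1 : ℝ) + 3 / 2) * Real.Gamma ((m : ℝ) + (p.2 : ℝ) + 3 / 2))

lemma gamma_lb (a : ℝ) (ha : 0 < a) (n : ℕ) :
    Real.Gamma a * a ^ n ≤ Real.Gamma (a + n) := by
  induction n with
  | zero => simp
  | succ n ih =>
    have h1 : (a + (n + 1) : ℝ) = (a + n) + 1 := by ring
    rw [Nat.cast_add, Nat.cast_one, h1, Real.Gamma_add_one (by positivity)]
    calc Real.Gamma a * a ^ (n + 1) = a * (Real.Gamma a * a ^ n) := by ring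
      _ ≤ (a + n) * (Real.Gamma a * a ^ n) := by
          apply mul_le_mul_of_nonneg_right (by linarith [Nat.cast_nonneg (α := ℝ) n])
          positivity
      _ ≤ (a + n) * Real.Gamma (a + n) := by
          apply mul_le_mul_of_nonneg_left ih (by positivity)

lemma sum_inv_factorial_antidiagonal (K : ℕ) :
    ∑ p ∈ Finset.HasAntidiagonal.antidiagonal K, (1 : ℝ) / ((Nat.factorial p.1) * (Nat.factorial p.2)) = 2 ^ K / (Nat.factorial K) := by
  rw [Finset.Nat.sum_antidiagonal_eq_sum_range_succ_mk]
  have h : ∀ i ∈ Finset.range (K + 1),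
      (1 : ℝ) / (Nat.factorial i * Nat.factorial (K - i)) = (K.choose i : ℝ) / (Nat.factorial K) := by
    intro i hi
    rw [Nat.cast_choose ℝ (Nat.lt_succ_iff.mp (Finset.mem_range.mp hi))]
    have h1 : (Nat.factorial i : ℝ) ≠ 0 := by positivity
    have h2 : (Nat.factorial (K - i) : ℝ) ≠ 0 := by positivity
    have h3 : (Nat.factorial K : ℝ) ≠ 0 := by positivity
    field_simp
  rw [Finset.sum_congr rfl h, ← Finset.sum_div]
  congr 1
  rw [← Nat.cast_sum, Nat.sum_range_choose]
  push_cast; ring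

lemma abs_tsum_le_tsum (f g : ℕ → ℝ) (hb : ∀ k, |f k| ≤ g k) (hg : Summable g) :
    |∑' k, f k| ≤ ∑' k, g k := by
  have habs : Summable fun k => |f k| :=
    Summable.of_nonneg_of_le (fun k => abs_nonneg _) hb hg
  calc |∑' k, f k| ≤ ∑' k, |f k| := by
        have := norm_tsum_le_tsum_norm (f := f) (by simpa [Real.norm_eq_abs] using habs)
        simpa [Real.norm_eq_abs] using this
    _ ≤ ∑' k, g k := Summable.tsum_le_tsum hb habs hg

theorem abs_I2_le (m : ℕ) (r0 : ℝ) (hr0 : 0 < r0) :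
    |I2 m r0| ≤ Real.exp (r0 ^ 2 / (2 * (m : ℝ) + 3)) - 1 := by
  set x : ℝ := r0 ^ 2 / (2 * (m : ℝ) + 3) with hx
  set a : ℝ := (m : ℝ) + 3 / 2 with ha
  have ha0 : 0 < a := by positivity
  have hxpos : 0 < x := by positivity
  set f : ℕ → ℝ := fun k =>
    (-1 : ℝ) ^ (k + 1) * (r0 / 2) ^ (2 * (k + 1)) *
      ((2 * (m : ℝ) + 3) / (2 * (m : ℝ) + 2 * ((k : ℝ) + 1) + 3)) *
      ∑ p ∈ Finset.HasAntidiagonal.antidiagonal (k + 1),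
        Real.Gamma ((m : ℝ) + 3 / 2) ^ 2 /
          ((Nat.factorial p.1 : ℝ) * (Nat.factorial p.2 : ℝ) *
            Real.Gamma ((m : ℝ) + (p.1 : ℝ) + 3 / 2) * Real.Gamma ((m : ℝ) + (p.2 : ℝ) + 3 / 2))
    with hf
  set g : ℕ → ℝ := fun k => x ^ (k + 1) / Nat.factorial (k + 1) with hg
  -- key pointwise bound
  have hbound : ∀ k, |f k| ≤ g k := by
    intro k
    set K := k + 1 with hK
    -- the inner sum, bounded
    have hGpos : ∀ p : ℕ, 0 < Real.Gamma (a + p) := fun p =>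
      Real.Gamma_pos_of_pos (by positivity)
    have hterm : ∀ p ∈ Finset.HasAntidiagonal.antidiagonal K,
        Real.Gamma ((m : ℝ) + 3 / 2) ^ 2 /
          (((Nat.factorial p.1) : ℝ) * ((Nat.factorial p.2) : ℝ) *
            Real.Gamma ((m : ℝ) + (p.1 : ℝ) + 3 / 2) * Real.Gamma ((m : ℝ) + (p.2 : ℝ) + 3 / 2))
          ≤ (1 / a) ^ K * (1 / (((Nat.factorial p.1) : ℝ) * (Nat.factorial p.2))) := by
      intro p hp
      have hpsum : p.1 + p.2 = K := (Finset.HasAntidiagonal.mem_antidiagonal.mp hp)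
      have e1 : ((m : ℝ) + (p.1 : ℝ) + 3 / 2) = a + p.1 := by rw [ha]; ring
      have e2 : ((m : ℝ) + (p.2 : ℝ) + 3 / 2) = a + p.2 := by rw [ha]; ring
      have e0 : ((m : ℝ) + 3 / 2) = a := rfl
      rw [e0, e1, e2]
      have h1 := gamma_lb a ha0 p.1
      have h2 := gamma_lb a ha0 p.2
      have hGa : 0 < Real.Gamma a := Real.Gamma_pos_of_pos ha0
      have hf1 : (0 : ℝ) < (Nat.factorial p.1) := by positivity
      have hf2 : (0 : ℝ) < (Nat.factorial p.2) := by positivity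
      have key : Real.Gamma a ^ 2 /
          (((Nat.factorial p.1) : ℝ) * (Nat.factorial p.2) * Real.Gamma (a + p.1) * Real.Gamma (a + p.2))
          ≤ Real.Gamma a ^ 2 /
          (((Nat.factorial p.1) : ℝ) * (Nat.factorial p.2) * (Real.Gamma a * a ^ p.1) * (Real.Gamma a * a ^ p.2)) := by
        apply div_le_div_of_nonneg_left (by positivity) (by positivity)
        have := mul_le_mul h1 h2 (by positivity) (le_of_lt (hGpos p.1))
        calc ((Nat.factorial p.1) : ℝ) * (Nat.factorial p.2) * (Real.Gamma a * a ^ p.1) * (Real.Gamma a * a ^ p.2)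
            = ((Nat.factorial p.1) : ℝ) * (Nat.factorial p.2) * ((Real.Gamma a * a ^ p.1) * (Real.Gamma a * a ^ p.2)) := by ring
          _ ≤ ((Nat.factorial p.1) : ℝ) * (Nat.factorial p.2) * (Real.Gamma (a + p.1) * Real.Gamma (a + p.2)) := by
              apply mul_le_mul_of_nonneg_left this (by positivity)
          _ = ((Nat.factorial p.1) : ℝ) * (Nat.factorial p.2) * Real.Gamma (a + p.1) * Real.Gamma (a + p.2) := by ring
      refine key.trans (le_of_eq ?_)
      have : Real.Gamma a ^ 2 /
          (((Nat.factorial p.1) : ℝ) * (Nat.factorial p.2) * (Real.Gamma a * a ^ p.1) * (Real.Gamma a * a ^ p.2))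
          = 1 / (a ^ (p.1 + p.2)) * (1 / (((Nat.factorial p.1) : ℝ) * (Nat.factorial p.2))) := by
        rw [pow_add]
        field_simp
      rw [this, hpsum, one_div, ← inv_pow, inv_eq_one_div]
    have hSle : (∑ p ∈ Finset.HasAntidiagonal.antidiagonal K,
        Real.Gamma ((m : ℝ) + 3 / 2) ^ 2 /
          (((Nat.factorial p.1) : ℝ) * ((Nat.factorial p.2) : ℝ) *
            Real.Gamma ((m : ℝ) + (p.1 : ℝ) + 3 / 2) * Real.Gamma ((m : ℝ) + (p.2 : ℝ) + 3 / 2)))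
        ≤ (2 / a) ^ K / (Nat.factorial K) := by
      calc _ ≤ ∑ p ∈ Finset.HasAntidiagonal.antidiagonal K, (1 / a) ^ K * (1 / (((Nat.factorial p.1) : ℝ) * (Nat.factorial p.2))) :=
            Finset.sum_le_sum hterm
        _ = (1 / a) ^ K * (2 ^ K / (Nat.factorial K)) := by
            rw [← Finset.mul_sum, sum_inv_factorial_antidiagonal]
        _ = (2 / a) ^ K / (Nat.factorial K) := by
            rw [div_pow, div_pow, one_pow]; ring
    have hSnn : (0 : ℝ) ≤ ∑ p ∈ Finset.HasAntidiagonal.antidiagonal K,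
        Real.Gamma ((m : ℝ) + 3 / 2) ^ 2 /
          (((Nat.factorial p.1) : ℝ) * ((Nat.factorial p.2) : ℝ) *
            Real.Gamma ((m : ℝ) + (p.1 : ℝ) + 3 / 2) * Real.Gamma ((m : ℝ) + (p.2 : ℝ) + 3 / 2)) := by
      apply Finset.sum_nonneg
      intro p _
      have g1 : 0 < Real.Gamma ((m : ℝ) + (p.1 : ℝ) + 3 / 2) :=
        Real.Gamma_pos_of_pos (by positivity)
      have g2 : 0 < Real.Gamma ((m : ℝ) + (p.2 : ℝ) + 3 / 2) :=
        Real.Gamma_pos_of_pos (by positivity)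
      have hf1 : (0 : ℝ) < (Nat.factorial p.1) := by positivity
      have hf2 : (0 : ℝ) < (Nat.factorial p.2) := by positivity
      positivity
    have hratio_nn : (0 : ℝ) ≤ (2 * (m : ℝ) + 3) / (2 * (m : ℝ) + 2 * ((k : ℝ) + 1) + 3) := by
      positivity
    have hratio_le : (2 * (m : ℝ) + 3) / (2 * (m : ℝ) + 2 * ((k : ℝ) + 1) + 3) ≤ 1 := by
      rw [div_le_one (by positivity)]; linarith [Nat.cast_nonneg (α := ℝ) k]
    have habs : |f k| = (r0 / 2) ^ (2 * K) *
        ((2 * (m : ℝ) + 3) / (2 * (m : ℝ) + 2 * ((k : ℝ) + 1) + 3)) *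
        ∑ p ∈ Finset.HasAntidiagonal.antidiagonal K,
          Real.Gamma ((m : ℝ) + 3 / 2) ^ 2 /
            (((Nat.factorial p.1) : ℝ) * ((Nat.factorial p.2) : ℝ) *
              Real.Gamma ((m : ℝ) + (p.1 : ℝ) + 3 / 2) * Real.Gamma ((m : ℝ) + (p.2 : ℝ) + 3 / 2)) := by
      rw [hf]
      simp only [abs_mul, abs_pow, abs_neg, abs_one, one_pow, one_mul]
      rw [abs_of_nonneg hratio_nn, abs_of_nonneg hSnn, abs_of_pos (by positivity : (0:ℝ) < r0 / 2)]
    rw [habs, hg]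
    have hpow : (r0 / 2) ^ (2 * K) = (r0 ^ 2 / 4) ^ K := by
      rw [pow_mul]; congr 1; field_simp; ring
    calc (r0 / 2) ^ (2 * K) *
          ((2 * (m : ℝ) + 3) / (2 * (m : ℝ) + 2 * ((k : ℝ) + 1) + 3)) * _
        ≤ (r0 ^ 2 / 4) ^ K * 1 * ((2 / a) ^ K / (Nat.factorial K)) := by
          rw [hpow]
          apply mul_le_mul (mul_le_mul le_rfl hratio_le hratio_nn (by positivity)) hSle hSnn
            (by positivity)
      _ = x ^ K / Nat.factorial K := by
          rw [mul_one, ← mul_div_assoc, ← mul_pow]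
          congr 2
          rw [hx, ha]
          field_simp
          ring
  -- summability
  have hgsum : Summable g := by
    have := (Real.summable_pow_div_factorial x).comp_injective
      (add_left_injective 1)
    exact this
  have habs_sum : Summable fun k => |f k| :=
    Summable.of_nonneg_of_le (fun k => abs_nonneg _) hbound hgsum
  have hfsum : Summable f := habs_sum.of_abs
  have hI2 : I2 m r0 = ∑' k, f k := rfl
  have hexp : Real.exp x - 1 = ∑' k, g k := by
    have hx0 : Real.exp x = ∑' n : ℕ, x ^ n / (Nat.factorial n) := by
      rw [Real.exp_eq_exp_ℝ, NormedSpace.exp_eq_tsum_div]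
    have hsum0 : Summable (fun n : ℕ => x ^ n / (Nat.factorial n)) := Real.summable_pow_div_factorial x
    rw [hx0, Summable.tsum_eq_zero_add hsum0]
    simp [hg]
  rw [hI2, hexp]
  exact abs_tsum_le_tsum f g hbound hgsum
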